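/- Let E be a nonzero Banach space. For every M > 0 there exists a constant C_M > 0 (depending only on M) such that: for every unital continuous multiplication * on E, every a invertible in (E,*), every continuous multiplication ⋄ on E, and every constant r with 0 ≤ r < 1, if |*| ≤ M, ‖e_*‖ ≤ M, ‖a‖ ≤ M, ‖a⁻¹_*‖ ≤ M and |⋄ − *| ≤ r·M⁻³, then ⋄ is unital, a is invertible in (E,⋄), and ‖a⁻¹_⋄ − a⁻¹_*‖ ≤ s²·C_M·|⋄ − *|, where s = 1 + r·(1−r)⁻¹. -/

import Mathlib

open ContinuousLinearMap

/-- If a unit equals `1 - t` with `‖t‖ ≤ r < 1`, then its inverse has norm `≤ (1-r)⁻¹`. -/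
lemma stmt6_aux_inv_norm {A : Type*} [NormedRing A] [NormOneClass A]
    (U : Aˣ) (t : A) (hU : (U : A) = 1 - t) {r : ℝ} (hr : r < 1) (ht : ‖t‖ ≤ r) :
    ‖((U⁻¹ : Aˣ) : A)‖ ≤ (1 - r)⁻¹ := by
  have h := U.mul_inv
  rw [hU, sub_mul, one_mul] at h
  have h1 : ((U⁻¹ : Aˣ) : A) = 1 + t * ((U⁻¹ : Aˣ) : A) := by
    rw [← h]; abel
  have h2 : ‖((U⁻¹ : Aˣ) : A)‖ ≤ 1 + r * ‖((U⁻¹ : Aˣ) : A)‖ := by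
    have e1 : ‖((U⁻¹ : Aˣ) : A)‖ ≤ ‖(1 : A)‖ + ‖t * ((U⁻¹ : Aˣ) : A)‖ := by
      conv_lhs => rw [h1]
      exact norm_add_le _ _
    have e2 : ‖t * ((U⁻¹ : Aˣ) : A)‖ ≤ ‖t‖ * ‖((U⁻¹ : Aˣ) : A)‖ := norm_mul_le _ _
    have e3 : ‖(1 : A)‖ = 1 := norm_one
    nlinarith [norm_nonneg ((U⁻¹ : Aˣ) : A), norm_nonneg t]
  have h3 : ‖((U⁻¹ : Aˣ) : A)‖ * (1 - r) ≤ 1 := by nlinarith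
  have h4 : (0:ℝ) < 1 - r := by linarith
  calc ‖((U⁻¹ : Aˣ) : A)‖ = ‖((U⁻¹ : Aˣ) : A)‖ * (1 - r) * (1 - r)⁻¹ := by
        field_simp
    _ ≤ 1 * (1 - r)⁻¹ := mul_le_mul_of_nonneg_right h3 (by positivity)
    _ = (1 - r)⁻¹ := one_mul _

set_option maxHeartbeats 2000000 in
theorem stmt_6
    {E : Type*} [NormedAddCommGroup E] [NormedSpace ℝ E] [CompleteSpace E] [Nontrivial E] :
    ∀ M : ℝ, 0 < M → ∃ C : ℝ, 0 < C ∧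
      ∀ (f g : E →L[ℝ] E →L[ℝ] E),
        (∀ x y z : E, f (f x y) z = f x (f y z)) →
        (∀ x y z : E, g (g x y) z = g x (g y z)) →
        ∀ e : E, (∀ x : E, f e x = x ∧ f x e = x) →
        ∀ a ainv : E, f a ainv = e → f ainv a = e →
        ∀ r : ℝ, 0 ≤ r → r < 1 →
        ‖f‖ ≤ M → ‖e‖ ≤ M → ‖a‖ ≤ M → ‖ainv‖ ≤ M → ‖g - f‖ ≤ r * (M ^ 3)⁻¹ →
        ∃ e' : E, (∀ x : E, g e' x = x ∧ g x e' = x) ∧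
          ∃ b : E, g a b = e' ∧ g b a = e' ∧
            ‖b - ainv‖ ≤ (1 + r * (1 - r)⁻¹) ^ 2 * C * ‖g - f‖ := by
  intro M hM
  refine ⟨M ^ 4 + M ^ 6, by positivity, ?_⟩
  intro f g hf hg e he a ainv ha1 ha2 r hr0 hr1 hfM heM haM hainvM hgf
  set δ := ‖g - f‖ with hδdef
  have hδ0 : 0 ≤ δ := hδdef ▸ norm_nonneg (g - f)
  -- M ≥ 1
  obtain ⟨x0, hx0⟩ := exists_ne (0 : E)
  have hM1 : 1 ≤ M := by
    have h1 : ‖x0‖ ≤ M * M * ‖x0‖ := by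
      calc ‖x0‖ = ‖f e x0‖ := by rw [(he x0).1]
        _ ≤ ‖f e‖ * ‖x0‖ := (f e).le_opNorm x0
        _ ≤ (‖f‖ * ‖e‖) * ‖x0‖ := by
            have h2 : ‖f e‖ ≤ ‖f‖ * ‖e‖ := f.le_opNorm e
            exact mul_le_mul_of_nonneg_right h2 (norm_nonneg x0)
        _ ≤ M * M * ‖x0‖ := by
            have h3 : ‖f‖ * ‖e‖ ≤ M * M :=
              mul_le_mul hfM heM (norm_nonneg e) (le_of_lt hM)
            exact mul_le_mul_of_nonneg_right h3 (norm_nonneg x0)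
    have hx0' : 0 < ‖x0‖ := norm_pos_iff.mpr hx0
    by_contra hc
    push_neg at hc
    have hMM : M * M < 1 := by nlinarith
    nlinarith
  -- numeric facts
  have h4 : (0:ℝ) < 1 - r := by linarith
  have hδM3 : δ * M ^ 3 ≤ r := by
    have h := mul_le_mul_of_nonneg_right hgf (by positivity : (0:ℝ) ≤ M ^ 3)
    rwa [mul_assoc, inv_mul_cancel₀ (by positivity : (M:ℝ) ^ 3 ≠ 0), mul_one] at h
  have hM21 : (1:ℝ) ≤ M ^ 2 := by nlinarith
  have hδM : δ * M ≤ r := by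
    have h5 : δ * M * 1 ≤ δ * M * M ^ 2 :=
      mul_le_mul_of_nonneg_left hM21 (mul_nonneg hδ0 hM.le)
    nlinarith [h5]
  -- algebra facts
  have hfe1 : f e = 1 := by ext x; exact (he x).1
  have hfe1' : f.flip e = 1 := by ext x; exact (he x).2
  have hLmulf : ∀ x y : E, f (f x y) = f x * f y := by
    intro x y; ext z; exact hf x y z
  have hRmulf : ∀ x y : E, f.flip (f x y) = f.flip y * f.flip x := by
    intro x y; ext z; exact (hf z x y).symm
  have hLmulg : ∀ x y : E, g (g x y) = g x * g y := by
    intro x y; ext z; exact hg x y z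
  have hRmulg : ∀ x y : E, g.flip (g x y) = g.flip y * g.flip x := by
    intro x y; ext z; exact (hg z x y).symm
  -- difference bounds
  have hdiff : ∀ x : E, ‖g x - f x‖ ≤ δ * ‖x‖ := by
    intro x
    have h1 : g x - f x = (g - f) x := (sub_apply g f x).symm
    rw [h1, hδdef]
    exact (g - f).le_opNorm x
  have hdiff' : ∀ x : E, ‖g.flip x - f.flip x‖ ≤ δ * ‖x‖ := by
    intro x
    refine opNorm_le_bound _ (by positivity) fun z => ?_
    have h1 : (g.flip x - f.flip x) z = (g - f) z x := by
      simp [sub_apply, flip_apply]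
    rw [h1]
    calc ‖(g - f) z x‖ ≤ ‖g - f‖ * ‖z‖ * ‖x‖ := (g - f).le_opNorm₂ z x
      _ = δ * ‖x‖ * ‖z‖ := by rw [← hδdef]; ring
  have hga_fa : ‖g a - f a‖ ≤ δ * M := by
    calc ‖g a - f a‖ ≤ δ * ‖a‖ := hdiff a
      _ ≤ δ * M := mul_le_mul_of_nonneg_left haM hδ0
  have hge_fe : ‖g e - f e‖ ≤ δ * M := by
    calc ‖g e - f e‖ ≤ δ * ‖e‖ := hdiff e
      _ ≤ δ * M := mul_le_mul_of_nonneg_left heM hδ0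
  have hge_fe' : ‖g.flip e - f.flip e‖ ≤ δ * M := by
    calc ‖g.flip e - f.flip e‖ ≤ δ * ‖e‖ := hdiff' e
      _ ≤ δ * M := mul_le_mul_of_nonneg_left heM hδ0
  have hga_fa' : ‖g.flip a - f.flip a‖ ≤ δ * M := by
    calc ‖g.flip a - f.flip a‖ ≤ δ * ‖a‖ := hdiff' a
      _ ≤ δ * M := mul_le_mul_of_nonneg_left haM hδ0
  have hfainv : ‖f ainv‖ ≤ M * M :=
    le_trans (f.le_opNorm ainv) (mul_le_mul hfM hainvM (norm_nonneg _) hM.le)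
  have hflipnorm : ∀ x : E, ‖f.flip x‖ ≤ ‖f‖ * ‖x‖ := by
    intro x
    refine opNorm_le_bound _ (by positivity) fun z => ?_
    rw [flip_apply]
    calc ‖f z x‖ ≤ ‖f‖ * ‖z‖ * ‖x‖ := f.le_opNorm₂ z x
      _ = ‖f‖ * ‖x‖ * ‖z‖ := by ring
  have hfainv' : ‖f.flip ainv‖ ≤ M * M :=
    le_trans (hflipnorm ainv) (mul_le_mul hfM hainvM (norm_nonneg _) hM.le)
  -- the units u, v
  have h_tu : ‖(1 : E →L[ℝ] E) - g e‖ ≤ r := by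
    rw [← hfe1, norm_sub_rev]
    exact hge_fe.trans hδM
  have h_tv : ‖(1 : E →L[ℝ] E) - g.flip e‖ ≤ r := by
    rw [← hfe1', norm_sub_rev]
    exact hge_fe'.trans hδM
  let u : (E →L[ℝ] E)ˣ := Units.oneSub _ (lt_of_le_of_lt h_tu hr1)
  let v : (E →L[ℝ] E)ˣ := Units.oneSub _ (lt_of_le_of_lt h_tv hr1)
  have hu : (↑u : E →L[ℝ] E) = g e := by
    show 1 - (1 - g e) = g e
    rw [sub_sub_cancel]
  have hv : (↑v : E →L[ℝ] E) = g.flip e := by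
    show 1 - (1 - g.flip e) = g.flip e
    rw [sub_sub_cancel]
  -- units f a and f.flip a
  have hfafainv : f a * f ainv = 1 := by rw [← hLmulf, ha1, hfe1]
  have hfainvfa : f ainv * f a = 1 := by rw [← hLmulf, ha2, hfe1]
  have hfafainv' : f.flip a * f.flip ainv = 1 := by rw [← hRmulf ainv a, ha2, hfe1']
  have hfainvfa' : f.flip ainv * f.flip a = 1 := by rw [← hRmulf a ainv, ha1, hfe1']
  let Ufa : (E →L[ℝ] E)ˣ := ⟨f a, f ainv, hfafainv, hfainvfa⟩
  let Ufa' : (E →L[ℝ] E)ˣ := ⟨f.flip a, f.flip ainv, hfafainv', hfainvfa'⟩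
  -- units g a and g.flip a
  have hd : ‖f ainv * (f a - g a)‖ ≤ r := by
    calc ‖f ainv * (f a - g a)‖ ≤ ‖f ainv‖ * ‖f a - g a‖ := norm_mul_le _ _
      _ ≤ (M * M) * (δ * M) :=
          mul_le_mul hfainv (by rw [norm_sub_rev]; exact hga_fa) (norm_nonneg _) (by positivity)
      _ = δ * M ^ 3 := by ring
      _ ≤ r := hδM3
  have hd' : ‖f.flip ainv * (f.flip a - g.flip a)‖ ≤ r := by
    calc ‖f.flip ainv * (f.flip a - g.flip a)‖
        ≤ ‖f.flip ainv‖ * ‖f.flip a - g.flip a‖ := norm_mul_le _ _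
      _ ≤ (M * M) * (δ * M) :=
          mul_le_mul hfainv' (by rw [norm_sub_rev]; exact hga_fa') (norm_nonneg _) (by positivity)
      _ = δ * M ^ 3 := by ring
      _ ≤ r := hδM3
  let w : (E →L[ℝ] E)ˣ := Units.oneSub _ (lt_of_le_of_lt hd hr1)
  let w' : (E →L[ℝ] E)ˣ := Units.oneSub _ (lt_of_le_of_lt hd' hr1)
  let La : (E →L[ℝ] E)ˣ := Ufa * w
  let Ra : (E →L[ℝ] E)ˣ := Ufa' * w'
  have hLa : (↑La : E →L[ℝ] E) = g a := by
    show (f a) * (1 - f ainv * (f a - g a)) = g a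
    rw [mul_sub, mul_one, ← mul_assoc, hfafainv, one_mul, sub_sub_cancel]
  have hRa : (↑Ra : E →L[ℝ] E) = g.flip a := by
    show (f.flip a) * (1 - f.flip ainv * (f.flip a - g.flip a)) = g.flip a
    rw [mul_sub, mul_one, ← mul_assoc, hfafainv', one_mul, sub_sub_cancel]
  -- the unit e' of g
  set e' : E := (↑v⁻¹ : E →L[ℝ] E) e with he'def
  have hrelv : ∀ y : E, g.flip ((↑v : E →L[ℝ] E) y) = ↑v * g.flip y := by
    intro y; rw [hv]; exact hRmulg y e
  have hrelvinv : ∀ y : E, g.flip ((↑v⁻¹ : E →L[ℝ] E) y) = ↑v⁻¹ * g.flip y := by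
    intro y
    have h1 := hrelv ((↑v⁻¹ : E →L[ℝ] E) y)
    have h2 : (↑v : E →L[ℝ] E) ((↑v⁻¹ : E →L[ℝ] E) y) = y := by
      rw [← ContinuousLinearMap.mul_apply, v.mul_inv, ContinuousLinearMap.one_apply]
    rw [h2] at h1
    calc g.flip ((↑v⁻¹ : E →L[ℝ] E) y)
        = ((↑v⁻¹ : E →L[ℝ] E) * ↑v) * g.flip ((↑v⁻¹ : E →L[ℝ] E) y) := by
          rw [v.inv_mul, one_mul]
      _ = (↑v⁻¹ : E →L[ℝ] E) * (↑v * g.flip ((↑v⁻¹ : E →L[ℝ] E) y)) := by rw [mul_assoc]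
      _ = (↑v⁻¹ : E →L[ℝ] E) * g.flip y := by rw [← h1]
  have he'_right : ∀ x : E, g x e' = x := by
    intro x
    have h1 : g.flip e' = 1 := by
      rw [he'def, hrelvinv e, ← hv, v.inv_mul]
    calc g x e' = g.flip e' x := rfl
      _ = x := by rw [h1, ContinuousLinearMap.one_apply]
  set e'' : E := (↑u⁻¹ : E →L[ℝ] E) e with he''def
  have hrelu : ∀ y : E, g ((↑u : E →L[ℝ] E) y) = ↑u * g y := by
    intro y; rw [hu]; exact hLmulg e y
  have hreluinv : ∀ y : E, g ((↑u⁻¹ : E →L[ℝ] E) y) = ↑u⁻¹ * g y := by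
    intro y
    have h1 := hrelu ((↑u⁻¹ : E →L[ℝ] E) y)
    have h2 : (↑u : E →L[ℝ] E) ((↑u⁻¹ : E →L[ℝ] E) y) = y := by
      rw [← ContinuousLinearMap.mul_apply, u.mul_inv, ContinuousLinearMap.one_apply]
    rw [h2] at h1
    calc g ((↑u⁻¹ : E →L[ℝ] E) y)
        = ((↑u⁻¹ : E →L[ℝ] E) * ↑u) * g ((↑u⁻¹ : E →L[ℝ] E) y) := by
          rw [u.inv_mul, one_mul]
      _ = (↑u⁻¹ : E →L[ℝ] E) * (↑u * g ((↑u⁻¹ : E →L[ℝ] E) y)) := by rw [mul_assoc]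
      _ = (↑u⁻¹ : E →L[ℝ] E) * g y := by rw [← h1]
  have he''_left : ∀ x : E, g e'' x = x := by
    intro x
    have h1 : g e'' = 1 := by
      rw [he''def, hreluinv e, ← hu, u.inv_mul]
    rw [h1, ContinuousLinearMap.one_apply]
  have he'e'' : e'' = e' := by
    have h1 := he'_right e''
    have h2 := he''_left e'
    rw [← h1]
    exact h2
  have he'_left : ∀ x : E, g e' x = x := by
    intro x; rw [← he'e'']; exact he''_left x
  -- the inverse of a for g
  set b : E := (↑La⁻¹ : E →L[ℝ] E) e' with hbdef
  set b' : E := (↑Ra⁻¹ : E →L[ℝ] E) e' with hb'def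
  have hgab : g a b = e' := by
    have h1 : g a b = ((↑La : E →L[ℝ] E) * (↑La⁻¹ : E →L[ℝ] E)) e' := by
      rw [hbdef, ← hLa, ContinuousLinearMap.mul_apply]
    rw [h1, La.mul_inv, ContinuousLinearMap.one_apply]
  have hgb'a : g b' a = e' := by
    have h1 : (g.flip a) ((↑Ra⁻¹ : E →L[ℝ] E) e') = e' := by
      rw [← hRa, ← ContinuousLinearMap.mul_apply, Ra.mul_inv, ContinuousLinearMap.one_apply]
    rw [hb'def]
    exact h1
  have hbb' : b = b' := by
    calc b = g e' b := (he'_left b).symm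
      _ = g (g b' a) b := by rw [hgb'a]
      _ = g b' (g a b) := hg b' a b
      _ = g b' e' := by rw [hgab]
      _ = b' := he'_right b'
  have hgba : g b a = e' := by rw [hbb']; exact hgb'a
  -- norm estimates
  have hwinv : ‖(↑w⁻¹ : E →L[ℝ] E)‖ ≤ (1 - r)⁻¹ :=
    stmt6_aux_inv_norm w _ rfl hr1 hd
  have hvinv : ‖(↑v⁻¹ : E →L[ℝ] E)‖ ≤ (1 - r)⁻¹ :=
    stmt6_aux_inv_norm v _ rfl hr1 h_tv
  have hs1 : (1:ℝ) ≤ (1 - r)⁻¹ := by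
    have h5 : (0:ℝ) < (1 - r)⁻¹ := inv_pos.mpr h4
    have h6 : (1 - r) * (1 - r)⁻¹ = 1 := mul_inv_cancel₀ (ne_of_gt h4)
    nlinarith [mul_nonneg hr0 h5.le]
  have hs0 : (0:ℝ) < (1 - r)⁻¹ := inv_pos.mpr h4
  have hLainveq : (↑La⁻¹ : E →L[ℝ] E) = (↑w⁻¹ : E →L[ℝ] E) * f ainv := by
    have h1 : La⁻¹ = w⁻¹ * Ufa⁻¹ := mul_inv_rev Ufa w
    rw [h1, Units.val_mul]
    rfl
  have hLainv : ‖(↑La⁻¹ : E →L[ℝ] E)‖ ≤ (1 - r)⁻¹ * (M * M) := by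
    rw [hLainveq]
    calc ‖(↑w⁻¹ : E →L[ℝ] E) * f ainv‖ ≤ ‖(↑w⁻¹ : E →L[ℝ] E)‖ * ‖f ainv‖ := norm_mul_le _ _
      _ ≤ (1 - r)⁻¹ * (M * M) := mul_le_mul hwinv hfainv (norm_nonneg _) hs0.le
  have hve : (↑v : E →L[ℝ] E) e = g e e := by rw [hv]; rfl
  have h0v : (↑v⁻¹ : E →L[ℝ] E) ((↑v : E →L[ℝ] E) e) = e := by
    rw [← ContinuousLinearMap.mul_apply, v.inv_mul, ContinuousLinearMap.one_apply]
  have he'e : ‖e' - e‖ ≤ (1 - r)⁻¹ * (δ * M * M) := by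
    have h1 : e' - e = (↑v⁻¹ : E →L[ℝ] E) (e - (↑v : E →L[ℝ] E) e) := by
      rw [map_sub, h0v, he'def]
    have h2 : ‖e - (↑v : E →L[ℝ] E) e‖ ≤ δ * M * M := by
      have h3 : e - (↑v : E →L[ℝ] E) e = (f e - g e) e := by
        rw [hve, sub_apply, (he e).1]
      rw [h3]
      calc ‖(f e - g e) e‖ ≤ ‖f e - g e‖ * ‖e‖ := le_opNorm _ _
        _ ≤ (δ * M) * M :=
            mul_le_mul (by rw [norm_sub_rev]; exact hge_fe) heM (norm_nonneg _) (by positivity)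
        _ = δ * M * M := by ring
    rw [h1]
    calc ‖(↑v⁻¹ : E →L[ℝ] E) (e - (↑v : E →L[ℝ] E) e)‖
        ≤ ‖(↑v⁻¹ : E →L[ℝ] E)‖ * ‖e - (↑v : E →L[ℝ] E) e‖ := le_opNorm _ _
      _ ≤ (1 - r)⁻¹ * (δ * M * M) := mul_le_mul hvinv h2 (norm_nonneg _) hs0.le
  have hLainvga : (↑La⁻¹ : E →L[ℝ] E) * g a = 1 := by rw [← hLa]; exact La.inv_mul
  have hkey : (↑La⁻¹ : E →L[ℝ] E) - f ainv
      = (↑La⁻¹ : E →L[ℝ] E) * (f a - g a) * f ainv := by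
    calc (↑La⁻¹ : E →L[ℝ] E) - f ainv
        = (↑La⁻¹ : E →L[ℝ] E) * (f a * f ainv)
          - ((↑La⁻¹ : E →L[ℝ] E) * g a) * f ainv := by
          rw [hfafainv, mul_one, hLainvga, one_mul]
      _ = (↑La⁻¹ : E →L[ℝ] E) * (f a - g a) * f ainv := by noncomm_ring
  have hdiffinv : ‖(↑La⁻¹ : E →L[ℝ] E) - f ainv‖
      ≤ ((1 - r)⁻¹ * (M * M)) * (δ * M) * (M * M) := by
    rw [hkey]
    calc ‖(↑La⁻¹ : E →L[ℝ] E) * (f a - g a) * f ainv‖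
        ≤ ‖(↑La⁻¹ : E →L[ℝ] E) * (f a - g a)‖ * ‖f ainv‖ := norm_mul_le _ _
      _ ≤ (‖(↑La⁻¹ : E →L[ℝ] E)‖ * ‖f a - g a‖) * ‖f ainv‖ :=
          mul_le_mul_of_nonneg_right (norm_mul_le _ _) (norm_nonneg _)
      _ ≤ (((1 - r)⁻¹ * (M * M)) * (δ * M)) * (M * M) := by
          have hx : ‖(↑La⁻¹ : E →L[ℝ] E)‖ * ‖f a - g a‖ ≤ ((1 - r)⁻¹ * (M * M)) * (δ * M) :=
            mul_le_mul hLainv (by rw [norm_sub_rev]; exact hga_fa) (norm_nonneg _)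
              (by positivity)
          exact mul_le_mul hx hfainv (norm_nonneg _) (by positivity)
  -- final bound
  have hsplit : b - ainv
      = (↑La⁻¹ : E →L[ℝ] E) (e' - e) + ((↑La⁻¹ : E →L[ℝ] E) - f ainv) e := by
    rw [map_sub, sub_apply, hbdef, (he ainv).2]
    abel
  have hfinal1 : ‖(↑La⁻¹ : E →L[ℝ] E) (e' - e)‖
      ≤ ((1 - r)⁻¹ * (M * M)) * ((1 - r)⁻¹ * (δ * M * M)) := by
    calc ‖(↑La⁻¹ : E →L[ℝ] E) (e' - e)‖ ≤ ‖(↑La⁻¹ : E →L[ℝ] E)‖ * ‖e' - e‖ := le_opNorm _ _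
      _ ≤ ((1 - r)⁻¹ * (M * M)) * ((1 - r)⁻¹ * (δ * M * M)) :=
          mul_le_mul hLainv he'e (norm_nonneg _) (by positivity)
  have hfinal2 : ‖((↑La⁻¹ : E →L[ℝ] E) - f ainv) e‖
      ≤ (((1 - r)⁻¹ * (M * M)) * (δ * M) * (M * M)) * M := by
    calc ‖((↑La⁻¹ : E →L[ℝ] E) - f ainv) e‖
        ≤ ‖(↑La⁻¹ : E →L[ℝ] E) - f ainv‖ * ‖e‖ := le_opNorm _ _
      _ ≤ (((1 - r)⁻¹ * (M * M)) * (δ * M) * (M * M)) * M :=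
          mul_le_mul hdiffinv heM (norm_nonneg _) (by positivity)
  have hseq : 1 + r * (1 - r)⁻¹ = (1 - r)⁻¹ := by
    field_simp
    ring
  have hbound : ‖b - ainv‖ ≤ (1 + r * (1 - r)⁻¹) ^ 2 * (M ^ 4 + M ^ 6) * δ := by
    rw [hseq]
    have hsum : ‖b - ainv‖ ≤ ‖(↑La⁻¹ : E →L[ℝ] E) (e' - e)‖
        + ‖((↑La⁻¹ : E →L[ℝ] E) - f ainv) e‖ := by
      rw [hsplit]; exact norm_add_le _ _
    have hextra : (0:ℝ) ≤ ((1 - r)⁻¹ - 1) * ((1 - r)⁻¹ * (M ^ 6 * δ)) := by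
      have := sub_nonneg.mpr hs1
      positivity
    nlinarith [hsum, hfinal1, hfinal2, hs0, hs1, hδ0, hM1]
  exact ⟨e', fun x => ⟨he'_left x, he'_right x⟩, b, hgab, hgba, hbound⟩
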